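/- Let h ∈ L₂(ℝ) be real-valued and non-zero. Then there exist constants c > 0 and δ > 0 such that for every α ∈ ℝ with |α| ≤ δ, one has ‖h‖₂² − ∫_ℝ h(x)h(x+α) dx ≥ c·α². -/

import Mathlib

open MeasureTheory

/-- For any non-zero real-valued `h ∈ L₂(ℝ)` there are constants `c > 0` and
`δ > 0` such that `‖h‖₂² − ∫ h(x)h(x+α) dx ≥ c·α²` whenever `|α| ≤ δ`. -/
theorem autocorrelation_quadratic_gap
    (h : ℝ → ℝ) (hmem : MemLp h 2 (volume : Measure ℝ))
    (hne : ¬ h =ᵐ[(volume : Measure ℝ)] 0) :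
    ∃ c : ℝ, 0 < c ∧ ∃ δ : ℝ, 0 < δ ∧ ∀ α : ℝ, |α| ≤ δ →
      c * α ^ 2 ≤ (∫ x : ℝ, h x ^ 2) - ∫ x : ℝ, h x * h (x + α) := by
  classical
  have hmemT : ∀ α : ℝ, MemLp (fun x => h (x + α)) 2 (volume : Measure ℝ) := fun α =>
    hmem.comp_measurePreserving (measurePreserving_add_right volume α)
  set H : Lp ℝ 2 (volume : Measure ℝ) := hmem.toLp h with hHdef
  set T : ℝ → Lp ℝ 2 (volume : Measure ℝ) := fun α => (hmemT α).toLp _ with hTdef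
  set R : ℝ := ‖H‖ with hRdef
  have hHcoe : ⇑H =ᵐ[(volume : Measure ℝ)] h := hmem.coeFn_toLp
  have hTcoe : ∀ α : ℝ, ⇑(T α) =ᵐ[(volume : Measure ℝ)] fun x => h (x + α) := fun α =>
    (hmemT α).coeFn_toLp
  have hT0 : T 0 = H :=
    MemLp.toLp_congr (hmemT 0) hmem (Filter.Eventually.of_forall fun x => by simp)
  have normT : ∀ α : ℝ, ‖T α‖ = R := by
    intro α
    have e : ‖T α‖ = (eLpNorm (fun x => h (x + α)) 2 (volume : Measure ℝ)).toReal :=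
      Lp.norm_toLp _ _
    have e2 : eLpNorm (fun x => h (x + α)) 2 (volume : Measure ℝ)
        = eLpNorm h 2 (volume : Measure ℝ) :=
      eLpNorm_comp_measurePreserving hmem.1 (measurePreserving_add_right volume α)
    have e3 : R = (eLpNorm h 2 (volume : Measure ℝ)).toReal := Lp.norm_toLp _ _
    rw [e, e2, e3]
  have inner_eq : ∀ α : ℝ, (inner ℝ H (T α) : ℝ) = ∫ x : ℝ, h x * h (x + α) := by
    intro α
    rw [L2.inner_def]
    refine integral_congr_ae ?_
    filter_upwards [hHcoe, hTcoe α] with x hx hx'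
    rw [hx, hx']
    simp [RCLike.inner_apply, mul_comm (h (x + α))]
  have gap : ∀ α : ℝ, ‖H - T α‖ ^ 2
      = 2 * (R ^ 2 - ∫ x : ℝ, h x * h (x + α)) := by
    intro α
    rw [norm_sub_sq_real, inner_eq, normT]
    ring
  have hHne : H ≠ 0 := by
    intro h0
    apply hne
    have h2 : ⇑H =ᵐ[(volume : Measure ℝ)] 0 := by
      rw [h0]; exact Lp.coeFn_zero _ _ _
    exact hHcoe.symm.trans h2
  have hRpos : 0 < R := norm_pos_iff.mpr hHne
  have key : ∀ α β : ℝ, ‖T β - T (β + α)‖ = ‖H - T α‖ := by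
    intro α β
    have hDmeas : AEStronglyMeasurable (fun y => h y - h (y + α)) (volume : Measure ℝ) :=
      hmem.1.sub (hmemT α).1
    have e1 : ‖T β - T (β + α)‖
        = (eLpNorm (fun x : ℝ => h (x + β) - h (x + (β + α))) 2 (volume : Measure ℝ)).toReal := by
      rw [Lp.norm_def]
      congr 1
      apply eLpNorm_congr_ae
      filter_upwards [Lp.coeFn_sub (T β) (T (β + α)), hTcoe β, hTcoe (β + α)] with x hx h1 h2
      rw [hx]
      simp [Pi.sub_apply, h1, h2]
    have e2 : (fun x : ℝ => h (x + β) - h (x + (β + α)))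
        = (fun y => h y - h (y + α)) ∘ (fun x => x + β) := by
      funext x
      simp [Function.comp, add_assoc]
    have e3 : eLpNorm ((fun y => h y - h (y + α)) ∘ (fun x => x + β)) 2 (volume : Measure ℝ)
        = eLpNorm (fun y => h y - h (y + α)) 2 (volume : Measure ℝ) :=
      eLpNorm_comp_measurePreserving hDmeas (measurePreserving_add_right volume β)
    have e4 : ‖H - T α‖
        = (eLpNorm (fun y => h y - h (y + α)) 2 (volume : Measure ℝ)).toReal := by
      rw [Lp.norm_def]
      congr 1
      apply eLpNorm_congr_ae
      filter_upwards [Lp.coeFn_sub H (T α), hHcoe, hTcoe α] with x hx h1 h2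
      rw [hx]
      simp [Pi.sub_apply, h1, h2]
    rw [e1, e2, e3, e4]
  have tele : ∀ (n : ℕ) (α : ℝ), ‖H - T (n * α)‖ ≤ n * ‖H - T α‖ := by
    intro n α
    induction n with
    | zero => simp [hT0]
    | succ n ih =>
      have h1 : ((n : ℝ) + 1) * α = (n : ℝ) * α + α := by ring
      push_cast
      rw [h1]
      calc ‖H - T ((n : ℝ) * α + α)‖
          ≤ ‖H - T ((n : ℝ) * α)‖ + ‖T ((n : ℝ) * α) - T ((n : ℝ) * α + α)‖ := by
            have := dist_triangle H (T ((n : ℝ) * α)) (T ((n : ℝ) * α + α))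
            simpa [dist_eq_norm] using this
        _ ≤ (n : ℝ) * ‖H - T α‖ + ‖H - T α‖ := by
            rw [key α ((n : ℝ) * α)]
            exact add_le_add_left ih _
        _ = ((n : ℝ) + 1) * ‖H - T α‖ := by ring
  have far : ∃ A : ℝ, 0 < A ∧ ∀ β : ℝ, A ≤ β →
      (∫ x : ℝ, h x * h (x + β)) ≤ R ^ 2 / 2 := by
    have hε : (0 : ℝ) < R / 6 := by linarith
    obtain ⟨g₀, hg₀supp, hg₀close, hg₀cont, hg₀mem⟩ :=
      hmem.exists_hasCompactSupport_eLpNorm_sub_le (by norm_num : (2 : ENNReal) ≠ ⊤)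
        ((ENNReal.ofReal_pos.mpr hε).ne')
    set G : Lp ℝ 2 (volume : Measure ℝ) := hg₀mem.toLp g₀ with hGdef
    have hmemTg : ∀ β : ℝ, MemLp (fun x => g₀ (x + β)) 2 (volume : Measure ℝ) := fun β =>
      hg₀mem.comp_measurePreserving (measurePreserving_add_right volume β)
    set Tg : ℝ → Lp ℝ 2 (volume : Measure ℝ) := fun β => (hmemTg β).toLp _ with hTgdef
    have hGcoe : ⇑G =ᵐ[(volume : Measure ℝ)] g₀ := hg₀mem.coeFn_toLp
    have hTgcoe : ∀ β : ℝ, ⇑(Tg β) =ᵐ[(volume : Measure ℝ)] fun x => g₀ (x + β) := fun β =>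
      (hmemTg β).coeFn_toLp
    have hclose : ‖H - G‖ ≤ R / 6 := by
      have e : ‖H - G‖ = (eLpNorm (h - g₀) 2 (volume : Measure ℝ)).toReal := by
        rw [Lp.norm_def]
        congr 1
        apply eLpNorm_congr_ae
        filter_upwards [Lp.coeFn_sub H G, hHcoe, hGcoe] with x hx h1 h2
        rw [hx]
        simp [Pi.sub_apply, h1, h2]
      rw [e]
      calc (eLpNorm (h - g₀) 2 (volume : Measure ℝ)).toReal
          ≤ (ENNReal.ofReal (R / 6)).toReal := ENNReal.toReal_mono (by simp) hg₀close
        _ = R / 6 := ENNReal.toReal_ofReal hε.le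
    have hcloseT : ∀ β : ℝ, ‖T β - Tg β‖ ≤ R / 6 := by
      intro β
      have e1 : ‖T β - Tg β‖
          = (eLpNorm ((h - g₀) ∘ (fun x => x + β)) 2 (volume : Measure ℝ)).toReal := by
        rw [Lp.norm_def]
        congr 1
        apply eLpNorm_congr_ae
        filter_upwards [Lp.coeFn_sub (T β) (Tg β), hTcoe β, hTgcoe β] with x hx h1 h2
        rw [hx]
        simp [Pi.sub_apply, h1, h2, Function.comp]
      have e2 : eLpNorm ((h - g₀) ∘ (fun x => x + β)) 2 (volume : Measure ℝ)
          = eLpNorm (h - g₀) 2 (volume : Measure ℝ) :=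
        eLpNorm_comp_measurePreserving (hmem.1.sub hg₀mem.1)
          (measurePreserving_add_right volume β)
      rw [e1, e2]
      calc (eLpNorm (h - g₀) 2 (volume : Measure ℝ)).toReal
          ≤ (ENNReal.ofReal (R / 6)).toReal := ENNReal.toReal_mono (by simp) hg₀close
        _ = R / 6 := ENNReal.toReal_ofReal hε.le
    obtain ⟨R₀, hR₀⟩ := hg₀supp.isBounded.subset_closedBall 0
    refine ⟨2 * max R₀ 0 + 1, by positivity, fun β hβ => ?_⟩
    have hzero : (inner ℝ G (Tg β) : ℝ) = 0 := by
      rw [L2.inner_def]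
      have hpt : ∀ x : ℝ, g₀ x * g₀ (x + β) = 0 := by
        intro x
        by_cases hx : g₀ x = 0
        · rw [hx, zero_mul]
        · have hx1 : x ∈ tsupport g₀ := subset_tsupport _ hx
          have hx2 : |x| ≤ R₀ := by
            have := hR₀ hx1
            simpa [Metric.mem_closedBall, Real.dist_eq] using this
          have hz : g₀ (x + β) = 0 := by
            apply image_eq_zero_of_notMem_tsupport
            intro hmem'
            have h3 : |x + β| ≤ R₀ := by
              have := hR₀ hmem'
              simpa [Metric.mem_closedBall, Real.dist_eq] using this
            have h5 : |x| ≤ max R₀ 0 := hx2.trans (le_max_left _ _)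
            have h6 : |x + β| ≤ max R₀ 0 := h3.trans (le_max_left _ _)
            have h7 := (abs_le.mp h5).1
            have h8 := (abs_le.mp h6).2
            linarith
          rw [hz, mul_zero]
      have e : ∀ᵐ x : ℝ ∂(volume : Measure ℝ),
          (inner ℝ (G x) ((Tg β) x) : ℝ) = (0 : ℝ → ℝ) x := by
        filter_upwards [hGcoe, hTgcoe β] with x h1 h2
        rw [h1, h2]
        simp [RCLike.inner_apply, mul_comm (g₀ (x + β)), hpt x]
      rw [integral_congr_ae e]
      simp
    have hsplit : (inner ℝ H (T β) : ℝ)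
        = (inner ℝ (H - G) (T β) : ℝ) + (inner ℝ G (T β - Tg β) : ℝ) + (inner ℝ G (Tg β) : ℝ) := by
      rw [inner_sub_left, inner_sub_right]
      ring
    have hnormG : ‖G‖ ≤ R + R / 6 := by
      have hGeq : ‖G‖ = ‖H - (H - G)‖ := by congr 1; abel
      have hle : ‖G‖ ≤ ‖H‖ + ‖H - G‖ := hGeq ▸ norm_sub_le _ _
      rw [← hRdef] at hle
      linarith
    have b1 : (inner ℝ (H - G) (T β) : ℝ) ≤ (R / 6) * R := by
      calc (inner ℝ (H - G) (T β) : ℝ) ≤ ‖H - G‖ * ‖T β‖ := real_inner_le_norm _ _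
        _ ≤ (R / 6) * R := by
            rw [normT]
            exact mul_le_mul_of_nonneg_right hclose hRpos.le
    have b2 : (inner ℝ G (T β - Tg β) : ℝ) ≤ (R + R / 6) * (R / 6) := by
      calc (inner ℝ G (T β - Tg β) : ℝ) ≤ ‖G‖ * ‖T β - Tg β‖ := real_inner_le_norm _ _
        _ ≤ (R + R / 6) * (R / 6) := by
            apply mul_le_mul hnormG (hcloseT β) (norm_nonneg _)
            linarith
    have hfin : (inner ℝ H (T β) : ℝ) ≤ R ^ 2 / 2 := by
      rw [hsplit, hzero]
      nlinarith
    rw [← inner_eq]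
    exact hfin
  obtain ⟨A, hApos, hA⟩ := far
  refine ⟨R ^ 2 / (8 * A ^ 2), by positivity, A, hApos, fun α hα => ?_⟩
  have hL : (∫ x : ℝ, h x ^ 2) = R ^ 2 := by
    have h0 : (inner ℝ H (T 0) : ℝ) = ∫ x : ℝ, h x * h (x + 0) := inner_eq 0
    rw [hT0] at h0
    have h1 : (∫ x : ℝ, h x * h (x + 0)) = ∫ x : ℝ, h x ^ 2 := by
      congr 1; funext x; rw [add_zero, sq]
    rw [← h1, ← h0, real_inner_self_eq_norm_sq]
  have main_nonneg : ∀ α : ℝ, 0 < α → α ≤ A →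
      R ^ 2 / (8 * A ^ 2) * α ^ 2 ≤ R ^ 2 - ∫ x : ℝ, h x * h (x + α) := by
    intro α hαpos hαA
    set n : ℕ := ⌈A / α⌉₊ with hndef
    have hdivpos : 0 < A / α := div_pos hApos hαpos
    have hn1 : A / α ≤ (n : ℝ) := Nat.le_ceil _
    have hn2 : (n : ℝ) < A / α + 1 := Nat.ceil_lt_add_one hdivpos.le
    have hnpos : 0 < (n : ℝ) := lt_of_lt_of_le hdivpos hn1
    have hnα1 : A ≤ (n : ℝ) * α := by
      rw [div_le_iff₀ hαpos] at hn1; linarith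
    have hnα2 : (n : ℝ) * α ≤ 2 * A := by
      have h9 : (n : ℝ) * α < A + α := by
        have h10 := mul_lt_mul_of_pos_right hn2 hαpos
        rwa [add_mul, div_mul_cancel₀ _ hαpos.ne', one_mul] at h10
      linarith
    have hgfar : (∫ x : ℝ, h x * h (x + (n : ℝ) * α)) ≤ R ^ 2 / 2 := hA _ hnα1
    have hbig : R ^ 2 ≤ ‖H - T ((n : ℝ) * α)‖ ^ 2 := by
      rw [gap]
      linarith
    have htele := tele n α
    have hsq : ‖H - T ((n : ℝ) * α)‖ ^ 2 ≤ ((n : ℝ) * ‖H - T α‖) ^ 2 := by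
      apply sq_le_sq'
      · have hnn : 0 ≤ (n : ℝ) * ‖H - T α‖ := by positivity
        linarith [norm_nonneg (H - T ((n : ℝ) * α))]
      · exact htele
    have hgapα := gap α
    set gα : ℝ := ∫ x : ℝ, h x * h (x + α) with hgαdef
    have hfact : R ^ 2 ≤ (n : ℝ) ^ 2 * (2 * (R ^ 2 - gα)) := by
      calc R ^ 2 ≤ ‖H - T ((n : ℝ) * α)‖ ^ 2 := hbig
        _ ≤ ((n : ℝ) * ‖H - T α‖) ^ 2 := hsq
        _ = (n : ℝ) ^ 2 * ‖H - T α‖ ^ 2 := by ring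
        _ = (n : ℝ) ^ 2 * (2 * (R ^ 2 - gα)) := by rw [hgapα]
    have hn2pos : 0 < (n : ℝ) ^ 2 := by positivity
    have hgapnonneg : 0 ≤ R ^ 2 - gα := by
      by_contra hc
      push_neg at hc
      have hneg : (n : ℝ) ^ 2 * (2 * (R ^ 2 - gα)) < 0 :=
        mul_neg_of_pos_of_neg hn2pos (by linarith)
      have := sq_nonneg R
      linarith
    have h1 : ((n : ℝ) * α) ^ 2 ≤ (2 * A) ^ 2 :=
      pow_le_pow_left₀ (le_of_lt (mul_pos hnpos hαpos)) hnα2 2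
    have h2 : α ^ 2 * R ^ 2 ≤ α ^ 2 * ((n : ℝ) ^ 2 * (2 * (R ^ 2 - gα))) :=
      mul_le_mul_of_nonneg_left hfact (sq_nonneg α)
    have h3 : ((n : ℝ) * α) ^ 2 * (2 * (R ^ 2 - gα)) ≤ (2 * A) ^ 2 * (2 * (R ^ 2 - gα)) :=
      mul_le_mul_of_nonneg_right h1 (by linarith)
    have h4 : α ^ 2 * ((n : ℝ) ^ 2 * (2 * (R ^ 2 - gα)))
        = ((n : ℝ) * α) ^ 2 * (2 * (R ^ 2 - gα)) := by ring
    have h5 : (2 * A) ^ 2 * (2 * (R ^ 2 - gα)) = (R ^ 2 - gα) * (8 * A ^ 2) := by ring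
    rw [div_mul_eq_mul_div, div_le_iff₀ (by positivity)]
    linarith [h2, h3, h4, h5]
  rw [hL]
  rcases lt_trichotomy α 0 with hneg | hzero | hpos
  · have hsym : (∫ x : ℝ, h x * h (x + α)) = ∫ x : ℝ, h x * h (x + (-α)) := by
      have hs := integral_add_right_eq_self (μ := (volume : Measure ℝ)) (fun x => h x * h (x + α)) (-α)
      calc (∫ x : ℝ, h x * h (x + α))
          = ∫ x : ℝ, h (x + (-α)) * h ((x + (-α)) + α) := hs.symm
        _ = ∫ x : ℝ, h x * h (x + (-α)) := by
            refine integral_congr_ae (Filter.Eventually.of_forall fun x => ?_)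
            show h (x + (-α)) * h ((x + (-α)) + α) = h x * h (x + (-α))
            rw [show x + (-α) + α = x by ring, mul_comm]
    rw [hsym]
    rw [show α ^ 2 = (-α) ^ 2 by ring]
    apply main_nonneg (-α) (by linarith)
    rw [abs_of_neg hneg] at hα; exact hα
  · subst hzero
    have hz : (∫ x : ℝ, h x * h (x + 0)) = R ^ 2 := by
      rw [← hL]; congr 1; funext x; rw [add_zero, sq]
    rw [hz]
    simp
  · apply main_nonneg α hpos
    rw [abs_of_pos hpos] at hα; exact hα
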